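/- Let g, g̃ ∈ ℝ^{r−1} be FIR coefficient vectors with δ := g − g̃, and suppose the system response Θ̃ = {R̃, M̃, Ñ, L̃} satisfies the SLS constraints for the estimated plant (Z, e₁, g̃ᵀ), with R̃ invertible as a rational matrix. If ‖Ñδᵀ‖ < 1 in H∞ norm, then the controller K̃ = L̃ − M̃R̃⁻¹Ñ internally stabilizes the true plant (Z, e₁, gᵀ) and achieves on it the closed-loop response Θ̂ given by [[R̂, N̂],[M̂, L̂]] = [[R̃, Ñ],[M̃, L̃]] + (1 − δᵀÑ)⁻¹·[Ñδᵀ; L̃δᵀ]·[R̃, Ñ]. -/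

import Mathlib

/- Preliminaries: transfer functions as real rational functions, RH∞, H∞ norms,
   System-Level Synthesis (SLS) constraints, controllers, closed-loop responses,
   coarse-grained identification, Gaussian vectors. -/

noncomputable section
open scoped Matrix BigOperators ENNReal
open MeasureTheory ProbabilityTheory Polynomial

namespace SLS

/-- Scalar transfer functions: real rational functions in `z`. -/
abbrev TF : Type := RatFunc ℝ

/-- Transfer matrices. -/
abbrev TMat (m n : ℕ) : Type := Matrix (Fin m) (Fin n) TF

/-- Embed a real matrix as a (constant) transfer matrix. -/
def rmap {m n : ℕ} (A : Matrix (Fin m) (Fin n) ℝ) : TMat m n := A.map RatFunc.C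

/-- Evaluate a scalar transfer function at a complex point. -/
def evalTF (f : TF) (z : ℂ) : ℂ :=
  (f.num.map (algebraMap ℝ ℂ)).eval z / (f.denom.map (algebraMap ℝ ℂ)).eval z

/-- Evaluate a transfer matrix at a complex point. -/
def evalMat {m n : ℕ} (F : TMat m n) (z : ℂ) : Matrix (Fin m) (Fin n) ℂ :=
  Matrix.of fun i j => evalTF (F i j) z

/-- Spectral norm (ℓ2 → ℓ2 operator norm) of a matrix over `ℝ` or `ℂ`. -/
def specNorm {𝕜 : Type} [RCLike 𝕜] {m n : ℕ} (M : Matrix (Fin m) (Fin n) 𝕜) : ℝ :=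
  ‖LinearMap.toContinuousLinearMap (Matrix.toEuclideanLin M)‖

/-- H∞ norm of a transfer matrix: sup over the unit circle of the spectral norm. -/
def hinfNorm {m n : ℕ} (F : TMat m n) : ℝ :=
  sSup {x : ℝ | ∃ z : ℂ, ‖z‖ = 1 ∧ x = specNorm (evalMat F z)}

/-- H∞ norm of a scalar transfer function. -/
def hinfNormTF (f : TF) : ℝ :=
  sSup {x : ℝ | ∃ z : ℂ, ‖z‖ = 1 ∧ x = ‖evalTF f z‖}

/-- A scalar transfer function is proper if its numerator degree does not exceed
its denominator degree. -/
def ProperTF (f : TF) : Prop := f.num.degree ≤ f.denom.degree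

/-- Strictly proper: vanishes at `z = ∞`. -/
def StrictlyProperTF (f : TF) : Prop := f.num.degree < f.denom.degree

/-- Stable: all poles lie strictly inside the open unit disk. -/
def StableTF (f : TF) : Prop :=
  ∀ z : ℂ, (f.denom.map (algebraMap ℝ ℂ)).eval z = 0 → ‖z‖ < 1

/-- Membership in RH∞ for scalar transfer functions: proper and stable. -/
def MemRHinfTF (f : TF) : Prop := ProperTF f ∧ StableTF f

/-- Membership in RH∞ for transfer matrices (entrywise). -/
def MemRHinf {m n : ℕ} (F : TMat m n) : Prop := ∀ i j, MemRHinfTF (F i j)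

/-- Strict properness of a transfer matrix (entrywise). -/
def StrictlyProper {m n : ℕ} (F : TMat m n) : Prop := ∀ i j, StrictlyProperTF (F i j)

/-- The transfer matrix `zI - A` for a real matrix `A`. -/
def zIA {n : ℕ} (A : Matrix (Fin n) (Fin n) ℝ) : TMat n n :=
  Matrix.diagonal (fun _ => (RatFunc.X : TF)) - rmap A

/-- A system response `Θ = {R, M, N, L}` for a plant with `n` states, `p` control
inputs and `q` measured outputs. -/
structure Response (n p q : ℕ) where
  R : TMat n n
  M : TMat p n
  N : TMat n q
  L : TMat p q

/-- The stability part of the SLS constraints: `R, M, N` strictly proper in RH∞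
and `L ∈ RH∞`. -/
def SLSStable {n p q : ℕ} (Θ : Response n p q) : Prop :=
  StrictlyProper Θ.R ∧ StrictlyProper Θ.M ∧ StrictlyProper Θ.N ∧
  MemRHinf Θ.R ∧ MemRHinf Θ.M ∧ MemRHinf Θ.N ∧ MemRHinf Θ.L

/-- The SLS constraints for the plant `(A, B₂, C₂)`:
`[zI − A, −B₂]·[[R, N],[M, L]] = [I, 0]`, `[[R, N],[M, L]]·[zI − A; −C₂] = [I; 0]`,
written blockwise, together with the stability conditions. -/
def SLSConstraints {n p q : ℕ} (A : Matrix (Fin n) (Fin n) ℝ)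
    (B₂ : Matrix (Fin n) (Fin p) ℝ) (C₂ : Matrix (Fin q) (Fin n) ℝ)
    (Θ : Response n p q) : Prop :=
  zIA A * Θ.R - rmap B₂ * Θ.M = 1 ∧
  zIA A * Θ.N - rmap B₂ * Θ.L = 0 ∧
  Θ.R * zIA A - Θ.N * rmap C₂ = 1 ∧
  Θ.M * zIA A - Θ.L * rmap C₂ = 0 ∧
  SLSStable Θ

/-- The robust SLS constraints with perturbations `(Δ₁, Δ₂)`: the second block
equation becomes `[[R, N],[M, L]]·[zI − A; −C₂] = [I + Δ₁; Δ₂]`. -/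
def RobustSLSConstraints {n p q : ℕ} (A : Matrix (Fin n) (Fin n) ℝ)
    (B₂ : Matrix (Fin n) (Fin p) ℝ) (C₂ : Matrix (Fin q) (Fin n) ℝ)
    (Δ₁ : TMat n n) (Δ₂ : TMat p n) (Θ : Response n p q) : Prop :=
  zIA A * Θ.R - rmap B₂ * Θ.M = 1 ∧
  zIA A * Θ.N - rmap B₂ * Θ.L = 0 ∧
  Θ.R * zIA A - Θ.N * rmap C₂ = 1 + Δ₁ ∧
  Θ.M * zIA A - Θ.L * rmap C₂ = Δ₂ ∧
  SLSStable Θ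

/-- The controller `K = L − M R⁻¹ N` induced by a system response. -/
def controller {n p q : ℕ} (Θ : Response n p q) : TMat p q :=
  Θ.L - Θ.M * Θ.R⁻¹ * Θ.N

/-- `K` achieves the closed-loop response `Θ'` on the plant `(A, B₂, C₂)`: in the
feedback loop `x = (zI − A)⁻¹(B₂u + δx)`, `y = C₂x + δy`, `u = Ky`, the transfer
matrices from `(δx, δy)` to `(x, u)` equal `[[R', N'],[M', L']]`. -/
def Achieves {n p q : ℕ} (A : Matrix (Fin n) (Fin n) ℝ)
    (B₂ : Matrix (Fin n) (Fin p) ℝ) (C₂ : Matrix (Fin q) (Fin n) ℝ)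
    (K : TMat p q) (Θ' : Response n p q) : Prop :=
  zIA A * Θ'.R = rmap B₂ * Θ'.M + 1 ∧
  zIA A * Θ'.N = rmap B₂ * Θ'.L ∧
  Θ'.M = K * rmap C₂ * Θ'.R ∧
  Θ'.L = K * rmap C₂ * Θ'.N + K

/-- `K` internally stabilizes the plant `(A, B₂, C₂)`: the four closed-loop
transfer matrices exist, `R', M', N'` are strictly proper, and all four lie in RH∞. -/
def InternallyStabilizes {n p q : ℕ} (A : Matrix (Fin n) (Fin n) ℝ)
    (B₂ : Matrix (Fin n) (Fin p) ℝ) (C₂ : Matrix (Fin q) (Fin n) ℝ)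
    (K : TMat p q) : Prop :=
  ∃ Θ' : Response n p q, Achieves A B₂ C₂ K Θ' ∧ SLSStable Θ'

/-! ### FIR SISO plants -/

/-- The down-shift matrix (ones on the subdiagonal). -/
def shiftMat (n : ℕ) : Matrix (Fin n) (Fin n) ℝ :=
  Matrix.of fun i j => if (i : ℕ) = (j : ℕ) + 1 then 1 else 0

/-- The first standard basis vector, as a column matrix. -/
def e1 (n : ℕ) : Matrix (Fin n) (Fin 1) ℝ :=
  Matrix.of fun i _ => if (i : ℕ) = 0 then 1 else 0

/-- A vector as a row matrix (`gᵀ`). -/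
def rowVec {n : ℕ} (g : Fin n → ℝ) : Matrix (Fin 1) (Fin n) ℝ :=
  Matrix.of fun _ j => g j

/-- The matrix `C₁ = [gᵀ; 0]`. -/
def C1mat {n : ℕ} (g : Fin n → ℝ) : Matrix (Fin 2) (Fin n) ℝ :=
  Matrix.of fun i j => if (i : ℕ) = 0 then g j else 0

/-- The matrix `D₁₂ = [0; 1]`. -/
def D12mat : Matrix (Fin 2) (Fin 1) ℝ :=
  Matrix.of fun i _ => if (i : ℕ) = 1 then 1 else 0

/-- Stack two scalar transfer functions into a 2×1 transfer matrix `[a; b]`. -/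
def col2 (a b : TF) : TMat 2 1 :=
  Matrix.of fun i _ => if (i : ℕ) = 0 then a else b

/-- The H∞ cost `J(g, Θ) = ‖[C₁, D₁₂]·[[R, N],[M, L]]·[B₁; D₂₁] + D₁₁‖` of a
system response for the generalized plant built from FIR coefficients `g`. -/
def cost {n nw : ℕ} (g : Fin n → ℝ) (B₁ : Matrix (Fin n) (Fin nw) ℝ)
    (D₂₁ : Matrix (Fin 1) (Fin nw) ℝ) (D₁₁ : Matrix (Fin 2) (Fin nw) ℝ)
    (Θ : Response n 1 1) : ℝ :=
  hinfNorm ((rmap (C1mat g) * Θ.R + rmap D12mat * Θ.M) * rmap B₁ +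
    (rmap (C1mat g) * Θ.N + rmap D12mat * Θ.L) * rmap D₂₁ + rmap D₁₁)

/-- The transfer matrix `[1 + g̃ᵀÑ; L̃]` and its H∞ norm. -/
def perfWeight {n : ℕ} (g : Fin n → ℝ) (Θ : Response n 1 1) : ℝ :=
  hinfNorm (col2 (1 + (rmap (rowVec g) * Θ.N) 0 0) (Θ.L 0 0))

/-- The robust SLS objective `Q(g̃, Θ̃, α) = J(g̃, Θ̃) + εα‖R̃B₁ + ÑD₂₁‖`. -/
def Qval {n nw : ℕ} (g : Fin n → ℝ) (B₁ : Matrix (Fin n) (Fin nw) ℝ)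
    (D₂₁ : Matrix (Fin 1) (Fin nw) ℝ) (D₁₁ : Matrix (Fin 2) (Fin nw) ℝ)
    (ε : ℝ) (Θ : Response n 1 1) (α : ℝ) : ℝ :=
  cost g B₁ D₂₁ D₁₁ Θ + ε * α * hinfNorm (Θ.R * rmap B₁ + Θ.N * rmap D₂₁)

/-- Feasibility for the robust SLS problem for the estimate `g̃` with uncertainty
parameter `ε`: `α > 0`, `Θ̃` satisfies the SLS constraints for `(Z, e₁, g̃ᵀ)`, and
`εα‖Ñ‖ + ‖[1 + g̃ᵀÑ; L̃]‖ ≤ α`. -/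
def RobustFeasible {n : ℕ} (g : Fin n → ℝ) (ε : ℝ) (Θ : Response n 1 1) (α : ℝ) : Prop :=
  0 < α ∧ SLSConstraints (shiftMat n) (e1 n) (rowVec g) Θ ∧
  ε * α * hinfNorm Θ.N + perfWeight g Θ ≤ α

/-- `(Θ̃, α)` is a minimizer of the robust SLS problem for `g̃`. -/
def RobustOptimal {n nw : ℕ} (g : Fin n → ℝ) (B₁ : Matrix (Fin n) (Fin nw) ℝ)
    (D₂₁ : Matrix (Fin 1) (Fin nw) ℝ) (D₁₁ : Matrix (Fin 2) (Fin nw) ℝ)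
    (ε : ℝ) (Θ : Response n 1 1) (α : ℝ) : Prop :=
  RobustFeasible g ε Θ α ∧
  ∀ Θ' α', RobustFeasible g ε Θ' α' → Qval g B₁ D₂₁ D₁₁ ε Θ α ≤ Qval g B₁ D₂₁ D₁₁ ε Θ' α'

/-- `Θ₀` is a minimizer of `J(g, ·)` over responses satisfying the SLS constraints
for the plant `(Z, e₁, gᵀ)`. -/
def OptimalResponse {n nw : ℕ} (g : Fin n → ℝ) (B₁ : Matrix (Fin n) (Fin nw) ℝ)
    (D₂₁ : Matrix (Fin 1) (Fin nw) ℝ) (D₁₁ : Matrix (Fin 2) (Fin nw) ℝ)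
    (Θ : Response n 1 1) : Prop :=
  SLSConstraints (shiftMat n) (e1 n) (rowVec g) Θ ∧
  ∀ Θ', SLSConstraints (shiftMat n) (e1 n) (rowVec g) Θ' →
    cost g B₁ D₂₁ D₁₁ Θ ≤ cost g B₁ D₂₁ D₁₁ Θ'

/-- The FIR transfer function `G(z) = Σ_{t=1}^{r−1} g_t z^{−t}` for
`g = (g₁, …, g_{r−1})`. -/
def firTF {n : ℕ} (g : Fin n → ℝ) : TF :=
  ∑ t : Fin n, RatFunc.C (g t) * (RatFunc.X)⁻¹ ^ ((t : ℕ) + 1)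

/-- The FIR transfer function `G(z) = Σ_{k=0}^{T−1} g_k z^{−k}` for a full
impulse-response vector `g_{0:T−1}`. -/
def firTF0 {T : ℕ} (g : Fin T → ℝ) : TF :=
  ∑ k : Fin T, RatFunc.C (g k) * (RatFunc.X)⁻¹ ^ (k : ℕ)

/-! ### Coarse-grained identification -/

/-- Euclidean (ℓ2) norm of a finite real vector. -/
def euclNorm {r : ℕ} (x : Fin r → ℝ) : ℝ := Real.sqrt (∑ i, x i ^ 2)

/-- ℓp norm of a finite real vector, `p ∈ [1, ∞]`. -/
def lpNorm {T : ℕ} (p : ℝ≥0∞) (x : Fin T → ℝ) : ℝ :=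
  if p = ∞ then ⨆ i, |x i| else (∑ i, |x i| ^ p.toReal) ^ (1 / p.toReal)

/-- `r^{2/max(p,2)}` as a real number. -/
def rExp (p : ℝ≥0∞) (r : ℕ) : ℝ := (r : ℝ) ^ ((2 / max p 2).toReal)

/-- The T×T lower-triangular Toeplitz matrix whose first column is `u`. -/
def toep {T : ℕ} (u : Fin T → ℝ) : Matrix (Fin T) (Fin T) ℝ :=
  Matrix.of fun i j =>
    if (j : ℕ) ≤ (i : ℕ) then u ⟨(i : ℕ) - (j : ℕ), lt_of_le_of_lt (Nat.sub_le _ _) i.isLt⟩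
    else 0

/-- The stacked input matrix `Z_mat = [Toep(u₁); …; Toep(u_m)]`. -/
def Zmat {T mE : ℕ} (u : Fin mE → Fin T → ℝ) : Matrix (Fin mE × Fin T) (Fin T) ℝ :=
  Matrix.of fun pr j => toep (u pr.1) pr.2 j

/-- `Z_matᵀ Z_mat`. -/
def ZtZ {T mE : ℕ} (u : Fin mE → Fin T → ℝ) : Matrix (Fin T) (Fin T) ℝ :=
  (Zmat u)ᵀ * Zmat u

/-- The least-squares estimate `g̃_{0:T−1} = (Z_matᵀZ_mat)⁻¹Z_matᵀ(y₁; …; y_m)`. -/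
def lsEst {T mE : ℕ} (u : Fin mE → Fin T → ℝ) (y : Fin mE → Fin T → ℝ) : Fin T → ℝ :=
  ((ZtZ u)⁻¹ * (Zmat u)ᵀ).mulVec fun pr => y pr.1 pr.2

/-- Pad the FIR coefficients `g = (g₁, …, g_{r−1})` to the impulse response
`g_{0:T−1} = (0, g₁, …, g_{r−1}, 0, …, 0)`. -/
def pad {r T : ℕ} (_ : r ≤ T) (g : Fin (r - 1) → ℝ) : Fin T → ℝ := fun k =>
  if hk : 1 ≤ (k : ℕ) ∧ (k : ℕ) < r then g ⟨(k : ℕ) - 1, by omega⟩ else 0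

/-- The estimated FIR coefficients `g̃ = (g̃₁, …, g̃_{r−1})` from coarse-grained
identification with true coefficients `g` and additive noise on the outputs. -/
def coarseEst {r T mE : ℕ} (hrT : r ≤ T) (u : Fin mE → Fin T → ℝ)
    (g : Fin (r - 1) → ℝ) (noise : Fin mE → Fin T → ℝ) : Fin (r - 1) → ℝ :=
  fun i =>
    lsEst u (fun k => (toep (u k)).mulVec (pad hrT g) + noise k)
      ⟨(i : ℕ) + 1, by have := i.isLt; omega⟩

/-! ### Gaussian random vectors -/

/-- The standard Gaussian measure on `Fin r → ℝ` (i.i.d. `N(0,1)` coordinates). -/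
def stdGaussianPi (r : ℕ) : Measure (Fin r → ℝ) :=
  Measure.pi fun _ => gaussianReal 0 1

/-- `δ` is a centered Gaussian random vector with covariance `Cov`: its law is the
pushforward of the standard Gaussian under some `A` with `AAᵀ = Cov`. -/
def IsCenteredGaussianVec {Ω : Type} [MeasurableSpace Ω] (P : Measure Ω) {r : ℕ}
    (δ : Ω → Fin r → ℝ) (Cov : Matrix (Fin r) (Fin r) ℝ) : Prop :=
  ∃ A : Matrix (Fin r) (Fin r) ℝ, A * Aᵀ = Cov ∧
    Measure.map δ P = Measure.map (fun x => A.mulVec x) (stdGaussianPi r)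

/-- The law of i.i.d. `N(0, σ²)` noise across `mE` experiments of length `T`. -/
def iidGaussianLaw (mE T : ℕ) (σ2 : ℝ) : Measure (Fin mE → Fin T → ℝ) :=
  Measure.pi fun _ => Measure.pi fun _ => gaussianReal 0 σ2.toNNReal


/-- Scalar multiplication of a transfer matrix by a scalar transfer function. -/
def sMulTF {m n : ℕ} (c : TF) (M : TMat m n) : TMat m n := Matrix.of fun i j => c * M i j

/-- The perturbed response `Θ̂` with `R̂ = (I+Δ₁)⁻¹R̃`, `M̂ = M̃ − Δ₂(I+Δ₁)⁻¹R̃`,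
`N̂ = (I+Δ₁)⁻¹Ñ`, `L̂ = L̃ − Δ₂(I+Δ₁)⁻¹Ñ` (with the rational matrix inverse). -/
def deltaPerturb {n p q : ℕ} (Δ₁ : TMat n n) (Δ₂ : TMat p n) (Θ : Response n p q) :
    Response n p q where
  R := (1 + Δ₁)⁻¹ * Θ.R
  M := Θ.M - Δ₂ * ((1 + Δ₁)⁻¹ * Θ.R)
  N := (1 + Δ₁)⁻¹ * Θ.N
  L := Θ.L - Δ₂ * ((1 + Δ₁)⁻¹ * Θ.N)

/-- The Sherman–Morrison form of the perturbed response in the FIR SISO case: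
`[[R̂, N̂],[M̂, L̂]] = [[R̃, Ñ],[M̃, L̃]] + (1 − δᵀÑ)⁻¹·[Ñδᵀ; L̃δᵀ]·[R̃, Ñ]`. -/
def smPerturb {n : ℕ} (δ : Fin n → ℝ) (Θ : Response n 1 1) : Response n 1 1 where
  R := Θ.R + sMulTF (1 - (rmap (rowVec δ) * Θ.N) 0 0)⁻¹ (Θ.N * rmap (rowVec δ) * Θ.R)
  M := Θ.M + sMulTF (1 - (rmap (rowVec δ) * Θ.N) 0 0)⁻¹ (Θ.L * rmap (rowVec δ) * Θ.R)
  N := Θ.N + sMulTF (1 - (rmap (rowVec δ) * Θ.N) 0 0)⁻¹ (Θ.N * rmap (rowVec δ) * Θ.N)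
  L := Θ.L + sMulTF (1 - (rmap (rowVec δ) * Θ.N) 0 0)⁻¹ (Θ.L * rmap (rowVec δ) * Θ.N)

/-- The block-diagonal matrix with `m` copies of `Toep(g)` on the diagonal
(the action of `Toep(g)` on the stacked process noise of `m` experiments). -/
def bigToep {T mE : ℕ} (g : Fin T → ℝ) : Matrix (Fin mE × Fin T) (Fin mE × Fin T) ℝ :=
  Matrix.of fun pr qr => if pr.1 = qr.1 then toep g pr.2 qr.2 else 0

end SLS

open SLS
namespace SLSAux
open SLS Polynomial

/-- SGood: strictly proper member of RH∞. -/
def SGood (f : TF) : Prop := MemRHinfTF f ∧ StrictlyProperTF f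

lemma eval_map_dvd_zero {p q : ℝ[X]} (h : p ∣ q) {z : ℂ}
    (hz : (p.map (algebraMap ℝ ℂ)).eval z = 0) : (q.map (algebraMap ℝ ℂ)).eval z = 0 := by
  rcases h with ⟨c, hc⟩
  rw [hc, Polynomial.map_mul, Polynomial.eval_mul, hz, zero_mul]

lemma stable_of_denom_dvd {f g : TF} (h : StableTF g) (hd : f.denom ∣ g.denom) : StableTF f :=
  fun z hz => h z (eval_map_dvd_zero hd hz)

lemma stable_of_dvd_mul {f g h : TF} (hg : StableTF g) (hh : StableTF h)
    (hd : f.denom ∣ g.denom * h.denom) : StableTF f := by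
  intro z hz
  have := eval_map_dvd_zero hd hz
  rw [Polynomial.map_mul, Polynomial.eval_mul] at this
  rcases mul_eq_zero.mp this with h1 | h1
  · exact hg z h1
  · exact hh z h1

lemma stable_one : StableTF (1 : TF) := by
  intro z hz; rw [RatFunc.denom_one] at hz; simp at hz

lemma stable_C (c : ℝ) : StableTF (RatFunc.C c) := by
  intro z hz; rw [RatFunc.denom_C] at hz; simp at hz

lemma stable_zero : StableTF (0 : TF) := by
  intro z hz; rw [RatFunc.denom_zero] at hz; simp at hz

lemma stable_add {f g : TF} (hf : StableTF f) (hg : StableTF g) : StableTF (f + g) :=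
  stable_of_dvd_mul hf hg (RatFunc.denom_add_dvd f g)

lemma stable_mul {f g : TF} (hf : StableTF f) (hg : StableTF g) : StableTF (f * g) :=
  stable_of_dvd_mul hf hg (RatFunc.denom_mul_dvd f g)

end SLSAux
namespace SLSAux
open SLS Polynomial

lemma proper_iff {f : TF} : ProperTF f ↔ f.intDegree ≤ 0 := by
  rcases eq_or_ne f 0 with rfl | hf
  · simp [ProperTF]
  · rw [ProperTF, RatFunc.intDegree,
      Polynomial.degree_eq_natDegree (RatFunc.num_ne_zero hf),
      Polynomial.degree_eq_natDegree f.denom_ne_zero, Nat.cast_le]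
    omega

lemma sproper_zero : StrictlyProperTF (0 : TF) := by
  rw [StrictlyProperTF, RatFunc.num_zero, Polynomial.degree_zero, RatFunc.denom_zero,
    Polynomial.degree_one]
  simp

lemma sproper_iff {f : TF} : StrictlyProperTF f ↔ f = 0 ∨ f.intDegree < 0 := by
  rcases eq_or_ne f 0 with rfl | hf
  · simpa using sproper_zero
  · rw [StrictlyProperTF, RatFunc.intDegree,
      Polynomial.degree_eq_natDegree (RatFunc.num_ne_zero hf),
      Polynomial.degree_eq_natDegree f.denom_ne_zero, Nat.cast_lt]
    constructor
    · intro h; exact Or.inr (by omega)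
    · rintro (h | h); · exact absurd h hf
      omega

lemma proper_of_sproper {f : TF} (h : StrictlyProperTF f) : ProperTF f :=
  le_of_lt h

lemma proper_one : ProperTF (1 : TF) := proper_iff.mpr (by simp)

lemma proper_C (c : ℝ) : ProperTF (RatFunc.C c) := proper_iff.mpr (by simp)

lemma proper_add {f g : TF} (hf : ProperTF f) (hg : ProperTF g) : ProperTF (f + g) := by
  rcases eq_or_ne g 0 with rfl | hg0
  · simpa using hf
  rcases eq_or_ne (f + g) 0 with h0 | h0
  · rw [h0]; exact proper_of_sproper sproper_zero
  · exact proper_iff.mpr <| (RatFunc.intDegree_add_le hg0 h0).trans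
      (max_le (proper_iff.mp hf) (proper_iff.mp hg))

lemma proper_mul {f g : TF} (hf : ProperTF f) (hg : ProperTF g) : ProperTF (f * g) := by
  rcases eq_or_ne f 0 with rfl | hf0
  · simpa using proper_of_sproper sproper_zero
  rcases eq_or_ne g 0 with rfl | hg0
  · simpa using proper_of_sproper sproper_zero
  · exact proper_iff.mpr <| by
      rw [RatFunc.intDegree_mul hf0 hg0]
      exact add_nonpos (proper_iff.mp hf) (proper_iff.mp hg)

lemma sproper_add {f g : TF} (hf : StrictlyProperTF f) (hg : StrictlyProperTF g) :
    StrictlyProperTF (f + g) := by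
  rcases eq_or_ne f 0 with rfl | hf0
  · simpa using hg
  rcases eq_or_ne g 0 with rfl | hg0
  · simpa using hf
  rcases eq_or_ne (f + g) 0 with h0 | h0
  · rw [h0]; exact sproper_zero
  exact sproper_iff.mpr (Or.inr ((RatFunc.intDegree_add_le hg0 h0).trans_lt
    (max_lt ((sproper_iff.mp hf).resolve_left hf0) ((sproper_iff.mp hg).resolve_left hg0))))

lemma sproper_mul_proper {f g : TF} (hf : StrictlyProperTF f) (hg : ProperTF g) :
    StrictlyProperTF (f * g) := by
  rcases eq_or_ne f 0 with rfl | hf0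
  · simpa using sproper_zero
  rcases eq_or_ne g 0 with rfl | hg0
  · simpa using sproper_zero
  refine sproper_iff.mpr (Or.inr ?_)
  rw [RatFunc.intDegree_mul hf0 hg0]
  have h1 := (sproper_iff.mp hf).resolve_left hf0
  have h2 := proper_iff.mp hg
  omega

lemma proper_mul_sproper {f g : TF} (hf : ProperTF f) (hg : StrictlyProperTF g) :
    StrictlyProperTF (f * g) := by
  rw [mul_comm]; exact sproper_mul_proper hg hf

end SLSAux
namespace SLSAux
open SLS Polynomial

lemma mem_one : MemRHinfTF (1 : TF) := ⟨proper_one, stable_one⟩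
lemma mem_C (c : ℝ) : MemRHinfTF (RatFunc.C c) := ⟨proper_C c, stable_C c⟩
lemma mem_zero : MemRHinfTF (0 : TF) := ⟨proper_of_sproper sproper_zero, stable_zero⟩
lemma mem_add {f g : TF} (hf : MemRHinfTF f) (hg : MemRHinfTF g) : MemRHinfTF (f + g) :=
  ⟨proper_add hf.1 hg.1, stable_add hf.2 hg.2⟩
lemma mem_mul {f g : TF} (hf : MemRHinfTF f) (hg : MemRHinfTF g) : MemRHinfTF (f * g) :=
  ⟨proper_mul hf.1 hg.1, stable_mul hf.2 hg.2⟩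

/-- strictly proper and in RH∞ -/
def SG (f : TF) : Prop := MemRHinfTF f ∧ StrictlyProperTF f

lemma sg_zero : SG 0 := ⟨mem_zero, sproper_zero⟩
lemma sg_add {f g : TF} (hf : SG f) (hg : SG g) : SG (f + g) :=
  ⟨mem_add hf.1 hg.1, sproper_add hf.2 hg.2⟩
lemma sg_mul_mem {f g : TF} (hf : SG f) (hg : MemRHinfTF g) : SG (f * g) :=
  ⟨mem_mul hf.1 hg, sproper_mul_proper hf.2 hg.1⟩
lemma mem_mul_sg {f g : TF} (hf : MemRHinfTF f) (hg : SG g) : SG (f * g) :=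
  ⟨mem_mul hf hg.1, proper_mul_sproper hf.1 hg.2⟩

lemma mem_sum {ι : Type*} (s : Finset ι) (f : ι → TF) (h : ∀ i ∈ s, MemRHinfTF (f i)) :
    MemRHinfTF (∑ i ∈ s, f i) :=
  Finset.sum_induction f _ (fun _ _ => mem_add) mem_zero h

lemma sg_sum {ι : Type*} (s : Finset ι) (f : ι → TF) (h : ∀ i ∈ s, SG (f i)) :
    SG (∑ i ∈ s, f i) :=
  Finset.sum_induction f _ (fun _ _ => sg_add) sg_zero h

/-- strictly proper and RH∞, matrix level -/
def SGM {m n : ℕ} (A : TMat m n) : Prop := ∀ i j, SG (A i j)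

lemma mem_rmap {m n : ℕ} (X : Matrix (Fin m) (Fin n) ℝ) : MemRHinf (rmap X) :=
  fun _ _ => mem_C _

lemma memRHinf_mul {m n k : ℕ} {A : TMat m n} {B : TMat n k}
    (hA : MemRHinf A) (hB : MemRHinf B) : MemRHinf (A * B) := fun i j => by
  rw [Matrix.mul_apply]
  exact mem_sum _ _ fun l _ => mem_mul (hA i l) (hB l j)

lemma sgm_mul_mem {m n k : ℕ} {A : TMat m n} {B : TMat n k}
    (hA : SGM A) (hB : MemRHinf B) : SGM (A * B) := fun i j => by
  rw [Matrix.mul_apply]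
  exact sg_sum _ _ fun l _ => sg_mul_mem (hA i l) (hB l j)

lemma mem_mul_sgm {m n k : ℕ} {A : TMat m n} {B : TMat n k}
    (hA : MemRHinf A) (hB : SGM B) : SGM (A * B) := fun i j => by
  rw [Matrix.mul_apply]
  exact sg_sum _ _ fun l _ => mem_mul_sg (hA i l) (hB l j)

lemma sgm_of (hm : ∀ {m n : ℕ} (A : TMat m n), MemRHinf A → StrictlyProper A → SGM A) : True := trivial

end SLSAux
namespace SLSAux
open SLS Polynomial

lemma eval_reverse_eq {Q : Polynomial ℂ} {w : ℂ} (hw : w ≠ 0) :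
    Q.reverse.eval w = Q.eval w⁻¹ * w ^ Q.natDegree := by
  letI := invertibleOfNonzero (inv_ne_zero hw)
  have h := Polynomial.eval₂_reverse_mul_pow (RingHom.id ℂ) (w⁻¹) Q
  simp only [Polynomial.eval₂_eq_eval_map, Polynomial.map_id] at h
  have hinv : (⅟(w⁻¹) : ℂ) = w := by
    rw [invOf_eq_inv, inv_inv]
  rw [hinv] at h
  calc Q.reverse.eval w = Q.reverse.eval w * ((w⁻¹) ^ Q.natDegree * w ^ Q.natDegree) := by
        rw [← mul_pow, inv_mul_cancel₀ hw, one_pow, mul_one]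
    _ = Q.eval w⁻¹ * w ^ Q.natDegree := by rw [← mul_assoc, h]

/-- Exterior bound via the maximum modulus principle. -/
lemma bound_exterior {h : TF} (hnz : h ≠ 0) (hsg : SG h) {C : ℝ}
    (hb : ∀ z : ℂ, ‖z‖ = 1 → ‖evalTF h z‖ ≤ C) :
    ∀ z : ℂ, 1 ≤ ‖z‖ → ‖evalTF h z‖ ≤ C := by
  set P : Polynomial ℂ := h.num.map (algebraMap ℝ ℂ) with hP
  set Q : Polynomial ℂ := h.denom.map (algebraMap ℝ ℂ) with hQ
  have hinj : Function.Injective (algebraMap ℝ ℂ) := (algebraMap ℝ ℂ).injective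
  have hQ0 : Q ≠ 0 := (Polynomial.map_ne_zero_iff hinj).mpr h.denom_ne_zero
  have hdeg : P.natDegree < Q.natDegree := by
    rw [hP, hQ, natDegree_map_eq_of_injective hinj, natDegree_map_eq_of_injective hinj]
    have := (sproper_iff.mp hsg.2).resolve_left hnz
    rw [RatFunc.intDegree] at this
    omega
  set d := Q.natDegree
  set nP := P.natDegree
  have hQstable : ∀ z : ℂ, 1 ≤ ‖z‖ → Q.eval z ≠ 0 := fun z hz h0 =>
    absurd (hsg.1.2 z h0) (not_lt.mpr hz)
  set F : ℂ → ℂ := fun w => w ^ (d - nP) * P.reverse.eval w / Q.reverse.eval w with hF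
  have hrevQ : ∀ w : ℂ, ‖w‖ ≤ 1 → Q.reverse.eval w ≠ 0 := by
    intro w hw
    rcases eq_or_ne w 0 with rfl | hw0
    · rw [← Polynomial.coeff_zero_eq_eval_zero, Polynomial.coeff_zero_reverse]
      exact Polynomial.leadingCoeff_ne_zero.mpr hQ0
    · rw [eval_reverse_eq hw0]
      refine mul_ne_zero (hQstable _ ?_) (pow_ne_zero _ hw0)
      rw [norm_inv]
      exact (one_le_inv₀ (norm_pos_iff.mpr hw0)).mpr hw
  have hFeq : ∀ z : ℂ, 1 ≤ ‖z‖ → F z⁻¹ = evalTF h z := by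
    intro z hz
    have hz0 : z ≠ 0 := by
      intro h0; rw [h0, norm_zero] at hz; linarith
    have hw0 : z⁻¹ ≠ 0 := inv_ne_zero hz0
    have hQz : Q.eval z ≠ 0 := hQstable z hz
    rw [hF]
    simp only
    rw [eval_reverse_eq hw0, eval_reverse_eq hw0, inv_inv]
    have h1 : (z⁻¹) ^ (d - nP) * (P.eval z * (z⁻¹) ^ nP) = P.eval z * (z⁻¹) ^ d := by
      rw [mul_comm (P.eval z), ← mul_assoc, ← pow_add, Nat.sub_add_cancel (le_of_lt hdeg),
        mul_comm]
    rw [h1, mul_div_mul_right _ _ (pow_ne_zero _ hw0)]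
    rfl
  have hdiffQ : ∀ w ∈ Metric.closedBall (0:ℂ) 1, Q.reverse.eval w ≠ 0 := by
    intro w hw
    exact hrevQ w (by simpa [Metric.mem_closedBall, dist_eq_norm] using hw)
  have hcont : DiffContOnCl ℂ F (Metric.ball 0 1) := by
    constructor
    · intro w hw
      have : DifferentiableAt ℂ F w := by
        apply DifferentiableAt.div
        · exact ((differentiable_pow _).differentiableAt).mul
            (Polynomial.differentiable _).differentiableAt
        · exact (Polynomial.differentiable _).differentiableAt
        · exact hdiffQ w (Metric.ball_subset_closedBall hw)
      exact this.differentiableWithinAt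
    · rw [closure_ball (0:ℂ) one_ne_zero]
      apply ContinuousOn.div
      · exact ((continuous_pow _).mul (Polynomial.continuous _)).continuousOn
      · exact (Polynomial.continuous _).continuousOn
      · exact hdiffQ
  intro z hz
  have hz0 : z ≠ 0 := by intro h0; rw [h0, norm_zero] at hz; linarith
  rw [← hFeq z hz]
  have hmem : z⁻¹ ∈ closure (Metric.ball (0:ℂ) 1) := by
    rw [closure_ball (0:ℂ) one_ne_zero]
    simp only [Metric.mem_closedBall, dist_zero_right, norm_inv]
    exact inv_le_one_of_one_le₀ hz
  refine Complex.norm_le_of_forall_mem_frontier_norm_le Metric.isBounded_ball hcont ?_ hmem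
  intro w hw
  rw [frontier_ball (0:ℂ) one_ne_zero] at hw
  have hw1 : ‖w‖ = 1 := by simpa [mem_sphere_iff_norm] using hw
  have hw0 : w ≠ 0 := by intro h0; rw [h0, norm_zero] at hw1; norm_num at hw1
  have : F w = evalTF h w⁻¹ := by
    have := hFeq w⁻¹ (by rw [norm_inv, hw1]; norm_num)
    rwa [inv_inv] at this
  rw [this]
  exact hb _ (by rw [norm_inv, hw1]; norm_num)

end SLSAux
namespace SLSAux
open SLS Polynomial

lemma evalTF_eq (f : TF) (z : ℂ) : evalTF f z = RatFunc.eval (algebraMap ℝ ℂ) z f := by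
  simp [evalTF, RatFunc.eval, Polynomial.eval₂_eq_eval_map]

lemma denom_eval_ne_of_stable {f : TF} (hst : StableTF f) {z : ℂ} (hz : 1 ≤ ‖z‖) :
    (f.denom.map (algebraMap ℝ ℂ)).eval z ≠ 0 :=
  fun h0 => absurd (hst z h0) (not_lt.mpr hz)

lemma one_sub_eq (h : TF) : (1 - h) = 1 + RatFunc.C (-1) * h := by
  rw [map_neg, map_one]; ring

lemma evalTF_one_sub {h : TF} (hst : StableTF h) {z : ℂ} (hz : 1 ≤ ‖z‖) :
    evalTF (1 - h) z = 1 - evalTF h z := by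
  have hdh : Polynomial.eval₂ (algebraMap ℝ ℂ) z h.denom ≠ 0 := by
    rw [Polynomial.eval₂_eq_eval_map]; exact denom_eval_ne_of_stable hst hz
  have hd1 : Polynomial.eval₂ (algebraMap ℝ ℂ) z (RatFunc.denom (1 : TF)) ≠ 0 := by
    rw [RatFunc.denom_one]; simp
  have hdC : Polynomial.eval₂ (algebraMap ℝ ℂ) z (RatFunc.denom (RatFunc.C (-1 : ℝ))) ≠ 0 := by
    rw [RatFunc.denom_C]; simp
  have hdch : Polynomial.eval₂ (algebraMap ℝ ℂ) z (RatFunc.denom (RatFunc.C (-1 : ℝ) * h)) ≠ 0 := by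
    intro h0
    have := Polynomial.eval₂_eq_zero_of_dvd_of_eval₂_eq_zero (algebraMap ℝ ℂ) z
      (RatFunc.denom_mul_dvd (RatFunc.C (-1 : ℝ)) h) h0
    rw [RatFunc.denom_C, one_mul] at this
    exact hdh this
  rw [one_sub_eq, evalTF_eq, RatFunc.eval_add _ _ hd1 hdch,
    RatFunc.eval_mul _ _ hdC hdh, RatFunc.eval_C, RatFunc.eval_one, evalTF_eq]
  simp
  ring

lemma not_sproper_one : ¬ StrictlyProperTF (1 : TF) := by
  rw [StrictlyProperTF, RatFunc.num_one, RatFunc.denom_one]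
  exact lt_irrefl _

/-- The key analytic lemma: small gain implies `(1-h)⁻¹ ∈ RH∞`. -/
lemma mem_inv_one_sub {h : TF} (hsg : SG h)
    (hb : ∀ z : ℂ, ‖z‖ = 1 → ‖evalTF h z‖ < 1) : MemRHinfTF (1 - h)⁻¹ := by
  rcases eq_or_ne h 0 with rfl | hnz
  · rw [sub_zero, inv_one]; exact mem_one
  have hne1 : h ≠ 1 := fun h1 => not_sproper_one (h1 ▸ hsg.2)
  have hu : (1 - h) ≠ 0 := sub_ne_zero_of_ne (Ne.symm hne1)
  -- uniform bound on the circle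
  have hinj : Function.Injective (algebraMap ℝ ℂ) := (algebraMap ℝ ℂ).injective
  have hcont : ContinuousOn (fun z => ‖evalTF h z‖) (Metric.sphere (0:ℂ) 1) := by
    apply ContinuousOn.norm
    apply ContinuousOn.div
    · exact (Polynomial.continuous _).continuousOn
    · exact (Polynomial.continuous _).continuousOn
    · intro z hz
      exact denom_eval_ne_of_stable hsg.1.2 (le_of_eq (mem_sphere_zero_iff_norm.mp hz).symm)
  obtain ⟨z₀, hz₀m, hmax⟩ := (isCompact_sphere (0:ℂ) 1).exists_isMaxOn
    ⟨1, by simp⟩ hcont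
  set C := ‖evalTF h z₀‖ with hCdef
  have hC1 : C < 1 := hb z₀ (mem_sphere_zero_iff_norm.mp hz₀m)
  have hble : ∀ z : ℂ, ‖z‖ = 1 → ‖evalTF h z‖ ≤ C := fun z hz =>
    hmax (mem_sphere_zero_iff_norm.mpr hz)
  have hext : ∀ z : ℂ, 1 ≤ ‖z‖ → ‖evalTF h z‖ ≤ C := bound_exterior hnz hsg hble
  -- nonvanishing of 1 - h outside the disk
  have huval : ∀ z : ℂ, 1 ≤ ‖z‖ → evalTF (1 - h) z ≠ 0 := by
    intro z hz h0
    rw [evalTF_one_sub hsg.1.2 hz] at h0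
    have : ‖evalTF h z‖ = 1 := by
      have : evalTF h z = 1 := by linear_combination -h0
      rw [this, norm_one]
    linarith [hext z hz]
  constructor
  · -- properness via intDegree
    have idh : h.intDegree < 0 := (sproper_iff.mp hsg.2).resolve_left hnz
    have hnegh : (-h) ≠ 0 := neg_ne_zero.mpr hnz
    have idu_le : (1 - h).intDegree ≤ 0 := by
      have h1 : (1 : TF) + (-h) ≠ 0 := by rwa [← sub_eq_add_neg]
      have := RatFunc.intDegree_add_le hnegh h1
      rw [← sub_eq_add_neg] at this
      rw [RatFunc.intDegree_neg] at this
      simpa using this.trans (max_le (by simp) (le_of_lt idh))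
    have idu_ge : 0 ≤ (1 - h).intDegree := by
      have h1 : (1 - h) + h ≠ 0 := by simpa using one_ne_zero
      have := RatFunc.intDegree_add_le hnz h1
      simp only [sub_add_cancel, RatFunc.intDegree_one] at this
      rcases max_cases (1 - h).intDegree h.intDegree with ⟨he, _⟩ | ⟨he, _⟩ <;> omega
    have idinv : (1 - h)⁻¹.intDegree = 0 := by
      have hinv0 : (1 - h)⁻¹ ≠ 0 := inv_ne_zero hu
      have := RatFunc.intDegree_mul hu hinv0
      rw [mul_inv_cancel₀ hu, RatFunc.intDegree_one] at this
      omega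
    exact proper_iff.mpr (le_of_eq idinv)
  · -- stability
    have hdvd : (1 - h)⁻¹.denom ∣ (1 - h).num := by
      refine (RatFunc.denom_dvd (RatFunc.num_ne_zero hu)).mpr ⟨(1 - h).denom, ?_⟩
      rw [← inv_div, RatFunc.num_div_denom]
    intro z hz
    by_contra hlt
    push_neg at hlt
    have hnum0 : ((1 - h).num.map (algebraMap ℝ ℂ)).eval z = 0 :=
      eval_map_dvd_zero hdvd hz
    have : evalTF (1 - h) z = 0 := by
      rw [evalTF, hnum0, zero_div]
    exact huval z hlt this

end SLSAux
namespace SLSAux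
open SLS Polynomial

lemma stable_sum {ι : Type*} (s : Finset ι) (f : ι → TF) (h : ∀ i ∈ s, StableTF (f i)) :
    StableTF (∑ i ∈ s, f i) :=
  Finset.sum_induction f _ (fun _ _ => stable_add) stable_zero h

lemma evalTF_add {f g : TF} (hf : StableTF f) (hg : StableTF g) {z : ℂ} (hz : 1 ≤ ‖z‖) :
    evalTF (f + g) z = evalTF f z + evalTF g z := by
  rw [evalTF_eq, evalTF_eq, evalTF_eq]
  refine RatFunc.eval_add _ _ ?_ ?_ <;>
    rw [Polynomial.eval₂_eq_eval_map] <;> exact denom_eval_ne_of_stable (by assumption) hz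

lemma evalTF_mul {f g : TF} (hf : StableTF f) (hg : StableTF g) {z : ℂ} (hz : 1 ≤ ‖z‖) :
    evalTF (f * g) z = evalTF f z * evalTF g z := by
  rw [evalTF_eq, evalTF_eq, evalTF_eq]
  refine RatFunc.eval_mul _ _ ?_ ?_ <;>
    rw [Polynomial.eval₂_eq_eval_map] <;> exact denom_eval_ne_of_stable (by assumption) hz

lemma evalTF_C (c : ℝ) (z : ℂ) : evalTF (RatFunc.C c) z = (c : ℂ) := by
  rw [evalTF_eq]; exact RatFunc.eval_C _ _

lemma evalTF_zero (z : ℂ) : evalTF 0 z = 0 := by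
  rw [evalTF_eq]; exact RatFunc.eval_zero _ _

lemma evalTF_sum {ι : Type*} (s : Finset ι) (f : ι → TF) (h : ∀ i ∈ s, StableTF (f i))
    {z : ℂ} (hz : 1 ≤ ‖z‖) :
    evalTF (∑ i ∈ s, f i) z = ∑ i ∈ s, evalTF (f i) z := by
  classical
  induction s using Finset.induction_on with
  | empty => simp [evalTF_zero]
  | insert a s' hni ih =>
    rw [Finset.sum_insert hni, Finset.sum_insert hni,
      evalTF_add (h a (Finset.mem_insert_self a s'))
        (stable_sum s' f fun i hi => h i (Finset.mem_insert_of_mem hi)) hz,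
      ih fun i hi => h i (Finset.mem_insert_of_mem hi)]

lemma specNorm_nonneg {n m : ℕ} (M : Matrix (Fin n) (Fin m) ℂ) : 0 ≤ specNorm M :=
  norm_nonneg _

/-- rank-one bound: `‖δᵀ v‖ ≤ ‖v δᵀ‖`. -/
lemma rank_one_bound {n : ℕ} (v : Fin n → ℂ) (dR : Fin n → ℝ)
    (M : Matrix (Fin n) (Fin n) ℂ) (hM : ∀ i j, M i j = v i * (dR j : ℂ)) :
    ‖∑ j, (dR j : ℂ) * v j‖ ≤ specNorm M := by
  classical
  set S : ℝ := ∑ j, dR j ^ 2 with hS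
  have hS0 : 0 ≤ S := Finset.sum_nonneg fun j _ => sq_nonneg _
  set xE : EuclideanSpace ℂ (Fin n) := (WithLp.equiv 2 (Fin n → ℂ)).symm (fun j => (dR j : ℂ))
  set vE : EuclideanSpace ℂ (Fin n) := (WithLp.equiv 2 (Fin n → ℂ)).symm v
  have hxnorm : ‖xE‖ = Real.sqrt S := by
    rw [EuclideanSpace.norm_eq]
    congr 1
    refine Finset.sum_congr rfl fun j _ => ?_
    simp [xE, sq_abs]
  have hvnorm : ‖vE‖ = Real.sqrt (∑ i, ‖v i‖ ^ 2) := by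
    rw [EuclideanSpace.norm_eq]; rfl
  -- Cauchy-Schwarz
  have hcs : ‖∑ j, (dR j : ℂ) * v j‖ ≤ Real.sqrt S * ‖vE‖ := by
    have hinner : (inner ℂ xE vE : ℂ) = ∑ j, (dR j : ℂ) * v j := by
      rw [PiLp.inner_apply]
      refine Finset.sum_congr rfl fun j _ => ?_
      simp [xE, vE, Complex.conj_ofReal, mul_comm]
    calc ‖∑ j, (dR j : ℂ) * v j‖ = ‖(inner ℂ xE vE : ℂ)‖ := by rw [hinner]
      _ ≤ ‖xE‖ * ‖vE‖ := norm_inner_le_norm _ _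
      _ = Real.sqrt S * ‖vE‖ := by rw [hxnorm]
  -- operator bound
  set T := LinearMap.toContinuousLinearMap (Matrix.toEuclideanLin M)
  have hTx : T xE = (S : ℂ) • vE := by
    have : Matrix.toEuclideanLin M xE
        = (WithLp.equiv 2 (Fin n → ℂ)).symm (M.mulVec fun j => (dR j : ℂ)) :=
      Matrix.toEuclideanLin_apply_piLp_toLp M _
    show Matrix.toEuclideanLin M xE = _
    rw [this]
    have : (M.mulVec fun j => (dR j : ℂ)) = fun i => (S : ℂ) * v i := by
      funext i
      rw [Matrix.mulVec]
      simp only [dotProduct, hM]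
      rw [hS]
      push_cast
      rw [Finset.sum_mul]
      refine Finset.sum_congr rfl fun j _ => by ring
    rw [this]
    rfl
  have hTnorm : ‖T xE‖ = S * ‖vE‖ := by
    rw [hTx, norm_smul]
    simp [abs_of_nonneg hS0]
  have hop : S * ‖vE‖ ≤ specNorm M * Real.sqrt S := by
    calc S * ‖vE‖ = ‖T xE‖ := hTnorm.symm
      _ ≤ ‖T‖ * ‖xE‖ := T.le_opNorm xE
      _ = specNorm M * Real.sqrt S := by rw [hxnorm]; rfl
  rcases eq_or_lt_of_le hS0 with hS0' | hS0'
  · -- S = 0 means dR = 0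
    have hdR : ∀ j, dR j = 0 := by
      intro j
      have h0 := (Finset.sum_eq_zero_iff_of_nonneg (fun j _ => sq_nonneg (dR j))).mp hS0'.symm
      have := h0 j (Finset.mem_univ j)
      exact pow_eq_zero_iff (n := 2) (by norm_num) |>.mp this
    have : (∑ j, (dR j : ℂ) * v j) = 0 := by
      refine Finset.sum_eq_zero fun j _ => by rw [hdR j]; simp
    rw [this, norm_zero]
    exact specNorm_nonneg M
  · have hsq : 0 < Real.sqrt S := Real.sqrt_pos.mpr hS0'
    have h1 : Real.sqrt S * (Real.sqrt S * ‖vE‖) = S * ‖vE‖ := by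
      rw [← mul_assoc, Real.mul_self_sqrt hS0]
    have h2 : Real.sqrt S * ‖vE‖ ≤ specNorm M := by
      have := hop
      nlinarith [Real.sq_sqrt hS0, Real.sqrt_nonneg S, norm_nonneg vE]
    exact hcs.trans h2

end SLSAux
namespace SLSAux
open SLS Polynomial

lemma specNorm_continuous {m n : ℕ} :
    Continuous (fun M : Matrix (Fin m) (Fin n) ℂ => specNorm M) := by
  have : (fun M : Matrix (Fin m) (Fin n) ℂ => specNorm M)
      = fun M => ‖(LinearMap.toContinuousLinearMap.toLinearMap.comp
          (Matrix.toEuclideanLin (𝕜 := ℂ) (m := Fin m) (n := Fin n)).toLinearMap) M‖ := rfl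
  rw [this]
  exact (LinearMap.continuous_of_finiteDimensional _).norm

lemma hinf_pointwise {m n : ℕ} {F : TMat m n} (hst : ∀ i j, StableTF (F i j)) :
    ∀ z : ℂ, ‖z‖ = 1 → specNorm (evalMat F z) ≤ hinfNorm F := by
  intro z hz
  set φ : ℂ → ℝ := fun w => specNorm (evalMat F w) with hφ
  have hset : {x : ℝ | ∃ w : ℂ, ‖w‖ = 1 ∧ x = specNorm (evalMat F w)}
      = φ '' Metric.sphere (0:ℂ) 1 := by
    ext x
    simp only [Set.mem_setOf_eq, Set.mem_image, mem_sphere_zero_iff_norm]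
    constructor
    · rintro ⟨w, hw, rfl⟩; exact ⟨w, hw, rfl⟩
    · rintro ⟨w, hw, rfl⟩; exact ⟨w, hw, rfl⟩
  have hev : ContinuousOn (fun w => evalMat F w) (Metric.sphere (0:ℂ) 1) := by
    rw [continuousOn_iff_continuous_restrict]
    apply continuous_pi; intro i; apply continuous_pi; intro j
    show Continuous (Set.restrict _ (fun w => evalTF (F i j) w))
    refine continuousOn_iff_continuous_restrict.mp ?_
    apply ContinuousOn.div
    · exact (Polynomial.continuous _).continuousOn
    · exact (Polynomial.continuous _).continuousOn
    · intro w hw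
      exact denom_eval_ne_of_stable (hst i j) (le_of_eq (mem_sphere_zero_iff_norm.mp hw).symm)
  have hφcont : ContinuousOn φ (Metric.sphere (0:ℂ) 1) :=
    specNorm_continuous.comp_continuousOn hev
  have hbdd : BddAbove (φ '' Metric.sphere (0:ℂ) 1) :=
    ((isCompact_sphere (0:ℂ) 1).image_of_continuousOn hφcont).bddAbove
  have hmem : φ z ∈ φ '' Metric.sphere (0:ℂ) 1 :=
    Set.mem_image_of_mem φ (mem_sphere_zero_iff_norm.mpr hz)
  calc specNorm (evalMat F z) = φ z := rfl
    _ ≤ sSup (φ '' Metric.sphere (0:ℂ) 1) := le_csSup hbdd hmem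
    _ = hinfNorm F := by rw [hinfNorm, hset]

lemma small_gain_pointwise {n : ℕ} {N : TMat n 1} (hN : ∀ i j, StableTF (N i j))
    (δ : Fin n → ℝ) (hsmall : hinfNorm (N * rmap (rowVec δ)) < 1) :
    ∀ z : ℂ, ‖z‖ = 1 → ‖evalTF ((rmap (rowVec δ) * N) 0 0) z‖ < 1 := by
  intro z hz
  have hz1 : 1 ≤ ‖z‖ := le_of_eq hz.symm
  set v : Fin n → ℂ := fun i => evalTF (N i 0) z with hv
  have hFentry : ∀ i j, (N * rmap (rowVec δ)) i j = N i 0 * RatFunc.C (δ j) := by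
    intro i j
    rw [Matrix.mul_apply]
    simp [rmap, rowVec]
  have hFst : ∀ i j, StableTF ((N * rmap (rowVec δ)) i j) := by
    intro i j; rw [hFentry]; exact stable_mul (hN i 0) (stable_C _)
  have hEvalF : ∀ i j, evalMat (N * rmap (rowVec δ)) z i j = v i * ((δ j : ℝ) : ℂ) := by
    intro i j
    show evalTF ((N * rmap (rowVec δ)) i j) z = _
    rw [hFentry, evalTF_mul (hN i 0) (stable_C _) hz1, evalTF_C]
  have hh : evalTF ((rmap (rowVec δ) * N) 0 0) z = ∑ j, ((δ j : ℝ) : ℂ) * v j := by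
    have hent : (rmap (rowVec δ) * N) 0 0 = ∑ j, RatFunc.C (δ j) * N j 0 := by
      rw [Matrix.mul_apply]
      refine Finset.sum_congr rfl fun j _ => ?_
      simp [rmap, rowVec]
    rw [hent, evalTF_sum _ _ (fun j _ => stable_mul (stable_C _) (hN j 0)) hz1]
    refine Finset.sum_congr rfl fun j _ => ?_
    rw [evalTF_mul (stable_C _) (hN j 0) hz1, evalTF_C]
  rw [hh]
  calc ‖∑ j, ((δ j : ℝ) : ℂ) * v j‖ ≤ specNorm (evalMat (N * rmap (rowVec δ)) z) :=
        rank_one_bound v δ _ hEvalF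
    _ ≤ hinfNorm (N * rmap (rowVec δ)) := hinf_pointwise hFst z hz
    _ < 1 := hsmall

end SLSAux
namespace SLSAux
open SLS Polynomial

set_option synthInstance.maxHeartbeats 1000000
set_option maxHeartbeats 2000000

lemma sMulTF_eq_smul {m n : ℕ} (c : TF) (M : TMat m n) : sMulTF c M = c • M := by
  ext i j
  simp [sMulTF, Matrix.smul_apply, smul_eq_mul]

lemma one_by_one_mul {m : ℕ} (Z : TMat 1 1) (Y : TMat 1 m) : Z * Y = (Z 0 0) • Y := by
  ext i j
  rw [Matrix.mul_apply, Fin.sum_univ_one, Matrix.smul_apply, smul_eq_mul,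
    Subsingleton.elim i 0]

lemma key_achieves {n : ℕ} (A R : TMat n n) (B N : TMat n 1) (M Ct D : TMat 1 n)
    (L K : TMat 1 1) (hR : IsUnit R.det)
    (hK : K = L - M * R⁻¹ * N)
    (h1 : A * R - B * M = 1) (h2 : A * N - B * L = 0)
    (h3 : R * A - N * Ct = 1) (h4 : M * A - L * Ct = 0)
    (s : TF) (hs1 : (1 : TF) + s * ((D * N) 0 0) = s) :
    (A * (R + s • (N * D * R)) = B * (M + s • (L * D * R)) + 1) ∧
    (A * (N + s • (N * D * N)) = B * (L + s • (L * D * N))) ∧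
    (M + s • (L * D * R) = K * (Ct + D) * (R + s • (N * D * R))) ∧
    (L + s • (L * D * N) = K * (Ct + D) * (N + s • (N * D * N)) + K) := by
  have hRiR : R⁻¹ * R = 1 := Matrix.nonsing_inv_mul R hR
  have c1 : A * R = 1 + B * M := sub_eq_iff_eq_add.mp h1
  have c2 : A * N = B * L := sub_eq_zero.mp h2
  have c3 : N * Ct = R * A - 1 := by
    rw [sub_eq_iff_eq_add.mp h3]; abel
  have c4 : L * Ct = M * A := (sub_eq_zero.mp h4).symm
  have hc2X : ∀ {k : ℕ} (X : TMat 1 k), A * (N * X) = B * (L * X) := by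
    intro k X
    rw [← Matrix.mul_assoc, c2, Matrix.mul_assoc]
  have hc4X : ∀ {k : ℕ} (X : TMat n k), L * (Ct * X) = M * (A * X) := by
    intro k X
    rw [← Matrix.mul_assoc, c4, Matrix.mul_assoc]
  have hc3X : ∀ {k : ℕ} (X : TMat n k), N * (Ct * X) = R * (A * X) - X := by
    intro k X
    rw [← Matrix.mul_assoc, c3, Matrix.sub_mul, Matrix.one_mul, Matrix.mul_assoc]
  have hRiRX : ∀ {k : ℕ} (X : TMat n k), R⁻¹ * (R * X) = X := by
    intro k X
    rw [← Matrix.mul_assoc, hRiR, Matrix.one_mul]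
  have hKexp : ∀ {k : ℕ} (Y : TMat 1 k), K * Y = L * Y - M * (R⁻¹ * (N * Y)) := by
    intro k Y
    rw [hK, Matrix.sub_mul, Matrix.mul_assoc (M * R⁻¹) N Y, Matrix.mul_assoc M R⁻¹ (N * Y)]
  have hKCt : ∀ {k : ℕ} (X : TMat n k), K * (Ct * X) = M * (R⁻¹ * X) := by
    intro k X
    rw [hKexp, hc4X, hc3X, Matrix.mul_sub, hRiRX, Matrix.mul_sub]
    abel
  have hDNX : ∀ {k : ℕ} (X : TMat 1 k), D * (N * X) = ((D * N) 0 0) • X := by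
    intro k X
    rw [← Matrix.mul_assoc, one_by_one_mul]
  have hsy : ∀ {a b : ℕ} (X : TMat a b), s • X = X + (s * ((D * N) 0 0)) • X := by
    intro a b X
    conv_lhs => rw [← hs1]
    rw [add_smul, one_smul]
  refine ⟨?_, ?_, ?_, ?_⟩
  · -- eq1
    simp only [Matrix.mul_add, Matrix.mul_smul, Matrix.mul_assoc]
    rw [hc2X (D * R), c1]
    abel
  · -- eq2
    simp only [Matrix.mul_add, Matrix.mul_smul, Matrix.mul_assoc]
    rw [hc2X (D * N), c2]
  · -- eq3
    simp only [Matrix.mul_add, Matrix.add_mul, Matrix.mul_smul, Matrix.smul_mul,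
      Matrix.mul_assoc]
    rw [hDNX (D * R)]
    simp only [Matrix.mul_smul, smul_add, smul_smul]
    rw [hKCt R, hRiR, Matrix.mul_one, hKCt (N * (D * R)), hKexp (D * R)]
    simp only [smul_sub]
    rw [hsy (L * (D * R)), hsy (M * (R⁻¹ * (N * (D * R))))]
    abel
  · -- eq4
    have hKval : K = L - M * (R⁻¹ * N) := by rw [hK, Matrix.mul_assoc]
    simp only [Matrix.mul_add, Matrix.add_mul, Matrix.mul_smul, Matrix.smul_mul,
      Matrix.mul_assoc]
    rw [hDNX (D * N)]
    simp only [Matrix.mul_smul, smul_add, smul_smul]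
    rw [hKCt N, hKCt (N * (D * N)), hKexp (D * N), hKval]
    simp only [smul_sub]
    rw [hsy (L * (D * N)), hsy (M * (R⁻¹ * (N * (D * N))))]
    abel

end SLSAux
open SLSAux

set_option maxHeartbeats 2000000
set_option synthInstance.maxHeartbeats 400000

/-- FIR specialization. If `Θ̃` satisfies the SLS constraints for the
estimated plant `(Z, e₁, g̃ᵀ)` and `‖Ñδᵀ‖ < 1` (H∞ norm, `δ = g − g̃`), then the
controller `K̃ = L̃ − M̃R̃⁻¹Ñ` internally stabilizes the true plant `(Z, e₁, gᵀ)` and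
achieves the Sherman–Morrison perturbed closed-loop response `Θ̂`. -/
theorem statement_7 (r : ℕ) (g gt : Fin (r - 1) → ℝ) (Θ : Response (r - 1) 1 1)
    (hsls : SLSConstraints (shiftMat (r - 1)) (e1 (r - 1)) (rowVec gt) Θ)
    (hR : IsUnit Θ.R.det)
    (hsmall : hinfNorm (Θ.N * rmap (rowVec (g - gt))) < 1) :
    InternallyStabilizes (shiftMat (r - 1)) (e1 (r - 1)) (rowVec g) (controller Θ) ∧
      Achieves (shiftMat (r - 1)) (e1 (r - 1)) (rowVec g) (controller Θ)
        (smPerturb (g - gt) Θ) := by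
  classical
  obtain ⟨h1, h2, h3, h4, hstab⟩ := hsls
  obtain ⟨spR, spM, spN, memR, memM, memN, memL⟩ := hstab
  have hsgmN : SGM Θ.N := fun i j => ⟨memN i j, spN i j⟩
  have hsgmR : SGM Θ.R := fun i j => ⟨memR i j, spR i j⟩
  have hsgh : SG ((rmap (rowVec (g - gt)) * Θ.N) 0 0) :=
    (mem_mul_sgm (mem_rmap _) hsgmN) 0 0
  have hb := small_gain_pointwise (fun i j => (memN i j).2) (g - gt) hsmall
  have hmems : MemRHinfTF (1 - (rmap (rowVec (g - gt)) * Θ.N) 0 0)⁻¹ :=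
    mem_inv_one_sub hsgh hb
  have hne1 : (rmap (rowVec (g - gt)) * Θ.N) 0 0 ≠ 1 :=
    fun h1' => not_sproper_one (h1' ▸ hsgh.2)
  have hu0 : (1 - (rmap (rowVec (g - gt)) * Θ.N) 0 0) ≠ 0 :=
    sub_ne_zero_of_ne (Ne.symm hne1)
  have hs1 : (1 : TF) + (1 - (rmap (rowVec (g - gt)) * Θ.N) 0 0)⁻¹ *
      ((rmap (rowVec (g - gt)) * Θ.N) 0 0) = (1 - (rmap (rowVec (g - gt)) * Θ.N) 0 0)⁻¹ := by
    field_simp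
    ring
  have hCsplit : rmap (rowVec g) = rmap (rowVec gt) + rmap (rowVec (g - gt)) := by
    ext i j
    simp only [rmap, Matrix.map_apply, Matrix.add_apply, rowVec, Matrix.of_apply,
      Pi.sub_apply, ← map_add]
    congr 1
    ring
  have key := key_achieves (zIA (shiftMat (r - 1))) Θ.R (rmap (e1 (r - 1))) Θ.N Θ.M
    (rmap (rowVec gt)) (rmap (rowVec (g - gt))) Θ.L (controller Θ) hR rfl h1 h2 h3 h4
    ((1 - (rmap (rowVec (g - gt)) * Θ.N) 0 0)⁻¹) hs1
  obtain ⟨k1, k2, k3, k4⟩ := key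
  have hach : Achieves (shiftMat (r - 1)) (e1 (r - 1)) (rowVec g) (controller Θ)
      (smPerturb (g - gt) Θ) := by
    refine ⟨?_, ?_, ?_, ?_⟩ <;> simp only [smPerturb, sMulTF_eq_smul]
    · exact k1
    · exact k2
    · rw [hCsplit]; exact k3
    · rw [hCsplit]; exact k4
  have hstab' : SLSStable (smPerturb (g - gt) Θ) := by
    have hsgmND : SGM (Θ.N * rmap (rowVec (g - gt))) := sgm_mul_mem hsgmN (mem_rmap _)
    have hX1 : SGM (Θ.N * rmap (rowVec (g - gt)) * Θ.R) := sgm_mul_mem hsgmND memR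
    have hX2 : SGM (Θ.L * rmap (rowVec (g - gt)) * Θ.R) :=
      mem_mul_sgm (memRHinf_mul memL (mem_rmap _)) hsgmR
    have hX3 : SGM (Θ.N * rmap (rowVec (g - gt)) * Θ.N) := sgm_mul_mem hsgmND memN
    have hX4 : SGM (Θ.L * rmap (rowVec (g - gt)) * Θ.N) :=
      mem_mul_sgm (memRHinf_mul memL (mem_rmap _)) hsgmN
    refine ⟨fun i j => ?_, fun i j => ?_, fun i j => ?_, fun i j => ?_, fun i j => ?_,
      fun i j => ?_, fun i j => ?_⟩ <;>
      simp only [smPerturb, sMulTF, Matrix.add_apply, Matrix.of_apply]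
    · exact sproper_add (spR i j) (proper_mul_sproper hmems.1 (hX1 i j).2)
    · exact sproper_add (spM i j) (proper_mul_sproper hmems.1 (hX2 i j).2)
    · exact sproper_add (spN i j) (proper_mul_sproper hmems.1 (hX3 i j).2)
    · exact mem_add (memR i j) (mem_mul hmems (hX1 i j).1)
    · exact mem_add (memM i j) (mem_mul hmems (hX2 i j).1)
    · exact mem_add (memN i j) (mem_mul hmems (hX3 i j).1)
    · exact mem_add (memL i j) (mem_mul hmems (hX4 i j).1)
  exact ⟨⟨smPerturb (g - gt) Θ, hach, hstab'⟩, hach⟩
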